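/- arXiv:1512.02873 — 2 statements merged into one kernel-verified Lean document; each statement's English description precedes it below -/
import Mathlib

section
/- Suppose μ : ℝ^N → ℝ is continuously differentiable and coercive (μ(α) → ∞ as ‖α‖ → ∞), and μ has two distinct strict local minima α₁ and α₂. Then μ possesses a third critical point α₃ distinct from α₁ and α₂ satisfying μ(α₃) > max(μ(α₁), μ(α₂)). -/
open Set Metric Filter Pointwise

local notation "⟪" x ", " y "⟫" => @inner ℝ _ _ x y

private lemma mp_arith (c σ n diff : ℝ) (hc : 0 ≤ c) (hσ : 0 < σ) (hn : σ ≤ n)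
    (hest : diff ≤ -(c * n ^ 2) + (σ / 2) * (c * n)) : diff ≤ -(c * (σ ^ 2 / 2)) := by
  have key : 0 ≤ c * ((n - σ) * (n + σ / 2)) :=
    mul_nonneg hc (mul_nonneg (by linarith) (by linarith))
  nlinarith [key]

set_option maxHeartbeats 1000000 in
lemma mountain_pass_key {F : Type*} [NormedAddCommGroup F] [InnerProductSpace ℝ F]
    [FiniteDimensional ℝ F]
    (μ : F → ℝ) (hμ : ContDiff ℝ 1 μ)
    (hco : Tendsto μ (cocompact F) atTop)
    (α₁ α₂ : F) (hne : α₁ ≠ α₂)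
    (hmin₂ : ∀ᶠ β in nhdsWithin α₂ {α₂}ᶜ, μ α₂ < μ β)
    (hle : μ α₁ ≤ μ α₂) :
    ∃ α₃, fderiv ℝ μ α₃ = 0 ∧ μ α₂ < μ α₃ := by
  by_contra hcon
  push_neg at hcon
  have hcrit : ∀ x, fderiv ℝ μ x = 0 → μ x ≤ μ α₂ := fun x hx => hcon x hx
  set m := μ α₂ with hm
  have hcont : Continuous μ := hμ.continuous
  -- sublevel sets are compact
  have hsubl : ∀ t : ℝ, IsCompact {x : F | μ x ≤ t} := by
    intro t
    have hev := hco.eventually (Filter.eventually_ge_atTop (t + 1))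
    rw [Filter.Eventually, Filter.mem_cocompact] at hev
    obtain ⟨K₀, hK₀, hK₀sub⟩ := hev
    refine hK₀.of_isClosed_subset (isClosed_le hcont continuous_const) ?_
    intro x hx
    by_contra hxK
    have : t + 1 ≤ μ x := hK₀sub hxK
    have : μ x ≤ t := hx
    linarith
  -- strict local min ball
  have hb2 : ∃ r > 0, ∀ β, dist β α₂ < r → β ≠ α₂ → m < μ β := by
    rw [nhdsWithin_basis_ball.eventually_iff] at hmin₂
    obtain ⟨r, hr, hball⟩ := hmin₂
    exact ⟨r, hr, fun β hd hne' => hball ⟨mem_ball.2 hd, hne'⟩⟩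
  obtain ⟨r₀, hr₀, hrball⟩ := hb2
  have hdpos : 0 < dist α₁ α₂ := dist_pos.2 hne
  set r : ℝ := min (r₀ / 2) (dist α₁ α₂ / 2) with hrdef
  have hr_pos : 0 < r := lt_min (by linarith) (by linarith)
  have hrr₀ : r < r₀ := lt_of_le_of_lt (min_le_left _ _) (by linarith)
  have hrd : r < dist α₁ α₂ := lt_of_le_of_lt (min_le_right _ _) (by linarith)
  haveI : Nontrivial F := nontrivial_of_ne α₁ α₂ hne
  have hsphne : (sphere α₂ r).Nonempty := NormedSpace.sphere_nonempty.2 hr_pos.le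
  obtain ⟨p, hp_sph, hp_min⟩ := (isCompact_sphere α₂ r).exists_isMinOn hsphne hcont.continuousOn
  have hpdist : dist p α₂ = r := mem_sphere.1 hp_sph
  have hpne : p ≠ α₂ := by
    intro h; rw [h, dist_self] at hpdist; exact hr_pos.ne' hpdist.symm
  have hpm : m < μ p := hrball p (by rw [hpdist]; exact hrr₀) hpne
  set δ : ℝ := μ p - m with hδdef
  have hδ : 0 < δ := by simp [hδdef]; linarith
  -- lower bound on connecting levels
  have hT2 : ∀ t : ℝ, α₂ ∈ connectedComponentIn {x : F | μ x ≤ t} α₁ → m + δ ≤ t := by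
    intro t ht
    have hα₁mem : α₁ ∈ {x : F | μ x ≤ t} :=
      connectedComponentIn_nonempty_iff.1 ⟨α₂, ht⟩
    have hα₁C : α₁ ∈ connectedComponentIn {x : F | μ x ≤ t} α₁ :=
      mem_connectedComponentIn hα₁mem
    have hCc : IsPreconnected (connectedComponentIn {x : F | μ x ≤ t} α₁) :=
      isPreconnected_connectedComponentIn
    have hCsub : connectedComponentIn {x : F | μ x ≤ t} α₁ ⊆ {x : F | μ x ≤ t} :=
      connectedComponentIn_subset _ _
    have hiv := hCc.intermediate_value ht hα₁C
      (continuous_dist.comp (continuous_id.prodMk continuous_const)).continuousOn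
      (f := fun x => dist x α₂)
    have hrmem : r ∈ Icc (dist α₂ α₂) (dist α₁ α₂) := by
      rw [dist_self]; exact ⟨hr_pos.le, hrd.le⟩
    obtain ⟨q, hqC, hq⟩ := hiv hrmem
    have hq_sph : q ∈ sphere α₂ r := mem_sphere.2 hq
    have h1 : μ p ≤ μ q := hp_min hq_sph
    have h2 : μ q ≤ t := hCsub hqC
    simp only [hδdef]; linarith
  -- T nonempty : a large level connecting them
  set R : ℝ := max ‖α₁‖ ‖α₂‖ with hRdef
  have hα₁B : α₁ ∈ closedBall (0 : F) R := by
    rw [mem_closedBall, dist_zero_right]; exact le_max_left _ _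
  have hα₂B : α₂ ∈ closedBall (0 : F) R := by
    rw [mem_closedBall, dist_zero_right]; exact le_max_right _ _
  obtain ⟨z, hzB, hzmax⟩ := (isCompact_closedBall (0 : F) R).exists_isMaxOn ⟨α₁, hα₁B⟩
    hcont.continuousOn
  set L : ℝ := μ z with hLdef
  have hBsub : closedBall (0 : F) R ⊆ {x : F | μ x ≤ L} := fun x hx => hzmax hx
  have hLmem : α₂ ∈ connectedComponentIn {x : F | μ x ≤ L} α₁ :=
    (convex_closedBall (0 : F) R).isPreconnected.subset_connectedComponentIn hα₁B hBsub hα₂B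
  have hmδL : m + δ ≤ L := hT2 L hLmem
  set b : ℝ := m + δ / 2 with hbdef
  set a : ℝ := m + δ / 4 with hadef
  have hma : m < a := by simp [hadef]; linarith
  have hab : a < b := by simp [hadef, hbdef]; linarith
  have hbL : b ≤ L := by simp [hbdef]; linarith
  have hα₁a : μ α₁ ≤ a := le_trans hle (by simp [hadef]; linarith)
  have hα₂a : μ α₂ ≤ a := by simp [hadef]; linarith
  have hα₁K : α₁ ∈ {x : F | μ x ≤ L} := by
    show μ α₁ ≤ L; linarith [hα₁a]
  have hα₁C : α₁ ∈ connectedComponentIn {x : F | μ x ≤ L} α₁ := mem_connectedComponentIn hα₁K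
  -- it suffices to connect at level b
  suffices hbmem : α₂ ∈ connectedComponentIn {x : F | μ x ≤ b} α₁ by
    have := hT2 b hbmem
    simp only [hbdef] at this
    linarith
  by_cases hS : ∃ x, a ≤ μ x ∧ μ x ≤ L
  swap
  · -- no points in the band: sublevel L = sublevel < a ⊆ sublevel b
    push_neg at hS
    have hsubb : connectedComponentIn {x : F | μ x ≤ L} α₁ ⊆ {x : F | μ x ≤ b} := by
      intro x hx
      have hxL : x ∈ {y : F | μ y ≤ L} := connectedComponentIn_subset _ _ hx
      rw [mem_setOf_eq] at hxL
      rw [mem_setOf_eq]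
      by_contra hxb
      push_neg at hxb
      have : L < μ x := hS x (le_of_lt (lt_trans hab hxb))
      linarith
    exact isPreconnected_connectedComponentIn.subset_connectedComponentIn hα₁C hsubb hLmem
  -- main deformation argument
  obtain ⟨w, hwS⟩ := hS
  have hScomp : IsCompact {x : F | a ≤ μ x ∧ μ x ≤ L} := by
    refine (hsubl L).of_isClosed_subset ?_ (fun x hx => hx.2)
    exact (isClosed_le continuous_const hcont).inter (isClosed_le hcont continuous_const)
  have hFc : Continuous (fun x => fderiv ℝ μ x) := hμ.continuous_fderiv one_ne_zero
  obtain ⟨x₀, hx₀S, hσmin⟩ := hScomp.exists_isMinOn ⟨w, hwS⟩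
    (continuous_norm.comp hFc).continuousOn
  set σ : ℝ := ‖fderiv ℝ μ x₀‖ with hσdef
  have hσpos : 0 < σ := by
    rw [hσdef, norm_pos_iff]
    intro h0
    have := hcrit x₀ h0
    have := hx₀S.1
    simp only [hadef] at this
    linarith
  -- the enlarged compact set and max of the gradient norm
  set K₂ : Set F := {x : F | μ x ≤ L} + closedBall (0 : F) 1 with hK₂def
  have hK₂comp : IsCompact K₂ := (hsubl L).add (isCompact_closedBall _ _)
  have hKK₂ : {x : F | μ x ≤ L} ⊆ K₂ := by
    intro x hx
    have h01 : (0:F) ∈ closedBall (0:F) 1 := mem_closedBall_self zero_le_one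
    have := add_mem_add hx h01
    simpa using this
  obtain ⟨xM, hxM, hMmax⟩ := hK₂comp.exists_isMaxOn ⟨α₁, hKK₂ hα₁K⟩
    (continuous_norm.comp hFc).continuousOn
  set M : ℝ := ‖fderiv ℝ μ xM‖ with hMdef
  have hM0 : 0 ≤ M := norm_nonneg _
  -- uniform continuity modulus
  obtain ⟨η, hη, hηp⟩ := Metric.uniformContinuousOn_iff.1
    (hK₂comp.uniformContinuousOn_of_continuous hFc.continuousOn) (σ / 2) (by positivity)
  set h : ℝ := min (1 / (M + 1)) (η / (M + 1)) with hhdef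
  have hhpos : 0 < h := lt_min (by positivity) (by positivity)
  have hfrac : M / (M + 1) < 1 := (div_lt_one (by linarith)).2 (by linarith)
  have hhM1 : h * M < 1 := by
    calc h * M ≤ (1 / (M + 1)) * M := by
          apply mul_le_mul_of_nonneg_right (min_le_left _ _) hM0
    _ = M / (M + 1) := by ring
    _ < 1 := hfrac
  have hhMη : h * M < η := by
    calc h * M ≤ (η / (M + 1)) * M := by
          apply mul_le_mul_of_nonneg_right (min_le_right _ _) hM0
    _ = η * (M / (M + 1)) := by ring
    _ < η * 1 := by exact mul_lt_mul_of_pos_left hfrac hη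
    _ = η := mul_one η
  -- cutoff function
  set φ : ℝ → ℝ := fun s => min 1 (max 0 ((s - a) / (b - a))) with hφdef
  have hba : 0 < b - a := by linarith
  have hφ01 : ∀ s, 0 ≤ φ s ∧ φ s ≤ 1 := by
    intro s
    constructor
    · exact le_min zero_le_one (le_max_left _ _)
    · exact min_le_left _ _
  have hφ0 : ∀ s, s ≤ a → φ s = 0 := by
    intro s hs
    have : (s - a) / (b - a) ≤ 0 := div_nonpos_of_nonpos_of_nonneg (by linarith) hba.le
    simp [hφdef, max_eq_left this]
  have hφ1 : ∀ s, b ≤ s → φ s = 1 := by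
    intro s hs
    have h1 : (1 : ℝ) ≤ (s - a) / (b - a) := (le_div_iff₀ hba).2 (by linarith)
    rw [hφdef]
    simp only
    rw [max_eq_right (le_trans zero_le_one h1), min_eq_left h1]
  have hφpos : ∀ s, 0 < φ s → a < s := by
    intro s hs
    by_contra hsa
    push_neg at hsa
    rw [hφ0 s hsa] at hs
    exact lt_irrefl 0 hs
  have hφcont : Continuous φ :=
    continuous_const.min (continuous_const.max ((continuous_id.sub continuous_const).div_const _))
  -- gradient vector field
  set v : F → F := fun x => gradient μ x with hvdef
  have hvc : Continuous v :=
    (InnerProductSpace.toDual ℝ F).symm.continuous.comp hFc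
  have hnormv : ∀ x, ‖v x‖ = ‖fderiv ℝ μ x‖ := by
    intro x
    rw [hvdef]
    simp only [gradient]
    exact (InnerProductSpace.toDual ℝ F).symm.norm_map _
  have hinner : ∀ x (y : F), fderiv ℝ μ x y = ⟪v x, y⟫ := by
    intro x y
    rw [hvdef]
    simp only [gradient]
    rw [InnerProductSpace.toDual_symm_apply]
  -- the deformation map
  set g : F → F := fun x => x - (h * φ (μ x)) • v x with hgdef
  have hgc : Continuous g :=
    continuous_id.sub ((continuous_const.mul (hφcont.comp hcont)).smul hvc)
  -- one step estimate
  have step : ∀ x, μ x ≤ L →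
      μ (g x) ≤ μ x ∧ (b ≤ μ x → μ (g x) ≤ μ x - h * (σ ^ 2 / 2)) := by
    intro x hxL
    by_cases hc0 : φ (μ x) = 0
    · have hgx : g x = x := by rw [hgdef]; simp [hc0]
      refine ⟨by rw [hgx], fun hbx => ?_⟩
      rw [hφ1 _ hbx] at hc0
      exact absurd hc0 one_ne_zero
    · have hφx : 0 < φ (μ x) := lt_of_le_of_ne (hφ01 _).1 (Ne.symm hc0)
      have hax : a < μ x := hφpos _ hφx
      have hxS : x ∈ {y : F | a ≤ μ y ∧ μ y ≤ L} := ⟨hax.le, hxL⟩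
      have hσx : σ ≤ ‖fderiv ℝ μ x‖ := hσmin hxS
      set c : ℝ := h * φ (μ x) with hcdef
      have hcpos : 0 < c := mul_pos hhpos hφx
      have hch : c ≤ h := by
        calc c = h * φ (μ x) := rfl
        _ ≤ h * 1 := mul_le_mul_of_nonneg_left (hφ01 _).2 hhpos.le
        _ = h := mul_one h
      set d : F := -(c • v x) with hddef
      have hgx : g x = x + d := by rw [hgdef, hddef]; simp [sub_eq_add_neg, hcdef]
      have hFxM : ‖fderiv ℝ μ x‖ ≤ M := hMmax (hKK₂ hxL)
      have hnd : ‖d‖ = c * ‖fderiv ℝ μ x‖ := by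
        rw [hddef, norm_neg, norm_smul, Real.norm_of_nonneg hcpos.le, hnormv]
      have hndhM : ‖d‖ ≤ h * M := by
        rw [hnd]
        exact mul_le_mul hch hFxM (norm_nonneg _) hhpos.le
      -- curve stays in K₂
      have curve_mem : ∀ t : ℝ, t ∈ Icc (0:ℝ) 1 → x + t • d ∈ K₂ := by
        intro t ht
        have : t • d ∈ closedBall (0 : F) 1 := by
          rw [mem_closedBall, dist_zero_right, norm_smul, Real.norm_of_nonneg ht.1]
          calc t * ‖d‖ ≤ 1 * ‖d‖ := mul_le_mul_of_nonneg_right ht.2 (norm_nonneg _)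
          _ = ‖d‖ := one_mul _
          _ ≤ h * M := hndhM
          _ ≤ 1 := hhM1.le
        exact add_mem_add hxL this
      -- mean value theorem
      have hψd : ∀ t : ℝ, HasDerivAt (fun s : ℝ => μ (x + s • d))
          (fderiv ℝ μ (x + t • d) d) t := by
        intro t
        have h1 : HasDerivAt (fun s : ℝ => x + s • d) d t := by
          simpa using ((hasDerivAt_id t).smul_const d).const_add x
        exact ((hμ.differentiable one_ne_zero (x + t • d)).hasFDerivAt).comp_hasDerivAt t h1
      obtain ⟨t₀, ht₀, heq⟩ := exists_hasDerivAt_eq_slope (fun s : ℝ => μ (x + s • d))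
        (fun t => fderiv ℝ μ (x + t • d) d) one_pos
        ((hcont.comp (continuous_const.add (continuous_id.smul continuous_const))).continuousOn)
        (fun t _ => hψd t)
      simp only [one_smul, zero_smul, add_zero, sub_zero, div_one] at heq
      set ξ : F := x + t₀ • d with hξdef
      have hξK₂ : ξ ∈ K₂ := curve_mem t₀ ⟨ht₀.1.le, ht₀.2.le⟩
      have hdistξ : dist ξ x < η := by
        rw [hξdef, dist_eq_norm]
        have : x + t₀ • d - x = t₀ • d := by abel
        rw [this, norm_smul, Real.norm_of_nonneg ht₀.1.le]
        calc t₀ * ‖d‖ ≤ 1 * ‖d‖ := mul_le_mul_of_nonneg_right ht₀.2.le (norm_nonneg _)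
        _ = ‖d‖ := one_mul _
        _ ≤ h * M := hndhM
        _ < η := hhMη
      have hclose : ‖fderiv ℝ μ ξ - fderiv ℝ μ x‖ < σ / 2 := by
        have := hηp ξ hξK₂ x (hKK₂ hxL) hdistξ
        rwa [dist_eq_norm] at this
      -- estimates
      have e2 : fderiv ℝ μ x d = -(c * ‖fderiv ℝ μ x‖ ^ 2) := by
        rw [hinner, hddef, inner_neg_right, real_inner_smul_right,
          real_inner_self_eq_norm_sq, hnormv]
      have e3 : (fderiv ℝ μ ξ - fderiv ℝ μ x) d ≤ (σ / 2) * ‖d‖ := by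
        calc (fderiv ℝ μ ξ - fderiv ℝ μ x) d ≤ ‖(fderiv ℝ μ ξ - fderiv ℝ μ x) d‖ :=
              le_abs_self _
        _ ≤ ‖fderiv ℝ μ ξ - fderiv ℝ μ x‖ * ‖d‖ := ContinuousLinearMap.le_opNorm _ _
        _ ≤ (σ / 2) * ‖d‖ := mul_le_mul_of_nonneg_right hclose.le (norm_nonneg _)
      have e1 : μ (g x) - μ x = fderiv ℝ μ ξ d := by
        rw [hgx, ← heq]
      have e4 : fderiv ℝ μ ξ d = fderiv ℝ μ x d + (fderiv ℝ μ ξ - fderiv ℝ μ x) d := by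
        simp
      have key_est : μ (g x) - μ x ≤ -(c * ‖fderiv ℝ μ x‖ ^ 2) + (σ / 2) * (c * ‖fderiv ℝ μ x‖) := by
        rw [e1, e4, e2]
        have := e3
        rw [hnd] at this
        linarith
      have hfinal : μ (g x) ≤ μ x - c * (σ ^ 2 / 2) := by
        have := mp_arith c σ ‖fderiv ℝ μ x‖ (μ (g x) - μ x) hcpos.le hσpos hσx key_est
        linarith
      constructor
      · have : 0 ≤ c * (σ ^ 2 / 2) := by positivity
        linarith
      · intro hbx
        have hcx : c = h := by rw [hcdef, hφ1 _ hbx, mul_one]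
        rw [hcx] at hfinal
        exact hfinal
  -- iterated decrease
  set s : ℝ := h * (σ ^ 2 / 2) with hsdef
  have hs : 0 < s := by positivity
  have iter : ∀ k : ℕ, ∀ x, μ x ≤ L → μ (g^[k] x) ≤ max (μ x - k * s) b := by
    intro k
    induction k with
    | zero =>
      intro x hx
      simp only [Function.iterate_zero, id_eq, Nat.cast_zero, zero_mul, sub_zero]
      exact le_max_left _ _
    | succ k ih =>
      intro x hx
      have hy := ih x hx
      set y := g^[k] x with hydef
      have hyL : μ y ≤ L := by
        refine le_trans hy (max_le ?_ hbL)
        have : (0:ℝ) ≤ k * s := by positivity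
        linarith
      rw [Function.iterate_succ_apply']
      rcases le_or_gt (μ y) b with hyb | hyb
      · exact le_trans (step y hyL).1 (le_trans hyb (le_max_right _ _))
      · have hdec := (step y hyL).2 hyb.le
        have : μ (g y) ≤ max (μ x - k * s) b - s := by linarith
        refine le_trans this ?_
        rcases le_total (μ x - k * s) b with h' | h'
        · rw [max_eq_right h']
          have : μ x - (k+1 : ℕ) * s ≤ b := by push_cast; nlinarith [hs]
          rw [max_eq_right this]
          linarith
        · rw [max_eq_left h']
          have h2 : μ x - (k+1 : ℕ) * s = (μ x - k * s) - s := by push_cast; ring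
          calc μ x - k * s - s = μ x - (k+1 : ℕ) * s := by rw [h2]
          _ ≤ max (μ x - (k+1 : ℕ) * s) b := le_max_left _ _
  -- choose the number of steps
  obtain ⟨n, hn⟩ := exists_nat_ge ((L - b) / s)
  have hnL : L - n * s ≤ b := by
    rw [div_le_iff₀ hs] at hn
    linarith
  -- fixed points
  have hfix : ∀ y, μ y ≤ a → g y = y := by
    intro y hy
    rw [hgdef]
    simp [hφ0 _ hy]
  have hGα₁ : g^[n] α₁ = α₁ := Function.iterate_fixed (hfix α₁ hα₁a) n
  have hGα₂ : g^[n] α₂ = α₂ := Function.iterate_fixed (hfix α₂ hα₂a) n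
  -- the deformed connected set
  set C := connectedComponentIn {x : F | μ x ≤ L} α₁ with hCdef
  have hCim : IsPreconnected (g^[n] '' C) :=
    isPreconnected_connectedComponentIn.image _ ((hgc.iterate n).continuousOn)
  have himsub : g^[n] '' C ⊆ {x : F | μ x ≤ b} := by
    rintro y ⟨x, hxC, rfl⟩
    have hxL : x ∈ {y : F | μ y ≤ L} := connectedComponentIn_subset _ _ hxC
    rw [mem_setOf_eq] at hxL
    have := iter n x hxL
    refine le_trans this (max_le ?_ le_rfl)
    linarith [hnL]
  have hα₁im : α₁ ∈ g^[n] '' C := ⟨α₁, hα₁C, hGα₁⟩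
  have hα₂im : α₂ ∈ g^[n] '' C := ⟨α₂, hLmem, hGα₂⟩
  exact hCim.subset_connectedComponentIn hα₁im himsub hα₂im

theorem stmt_4 {N : ℕ} (μ : EuclideanSpace ℝ (Fin N) → ℝ)
    (hμ : ContDiff ℝ 1 μ)
    (hcoercive : Filter.Tendsto μ (Filter.cocompact _) Filter.atTop)
    (α₁ α₂ : EuclideanSpace ℝ (Fin N)) (hne : α₁ ≠ α₂)
    (hmin₁ : ∀ᶠ β in nhdsWithin α₁ {α₁}ᶜ, μ α₁ < μ β)
    (hmin₂ : ∀ᶠ β in nhdsWithin α₂ {α₂}ᶜ, μ α₂ < μ β) :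
    ∃ α₃, α₃ ≠ α₁ ∧ α₃ ≠ α₂ ∧ fderiv ℝ μ α₃ = 0 ∧
      max (μ α₁) (μ α₂) < μ α₃ := by
  rcases le_total (μ α₁) (μ α₂) with hle | hle
  · obtain ⟨α₃, hcrit, hgt⟩ := mountain_pass_key μ hμ hcoercive α₁ α₂ hne hmin₂ hle
    have hmax : max (μ α₁) (μ α₂) = μ α₂ := max_eq_right hle
    refine ⟨α₃, ?_, ?_, hcrit, by rw [hmax]; exact hgt⟩
    · rintro rfl; exact absurd hgt (not_lt.2 hle)
    · rintro rfl; exact lt_irrefl _ hgt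
  · obtain ⟨α₃, hcrit, hgt⟩ := mountain_pass_key μ hμ hcoercive α₂ α₁ hne.symm hmin₁ hle
    have hmax : max (μ α₁) (μ α₂) = μ α₁ := max_eq_left hle
    refine ⟨α₃, ?_, ?_, hcrit, by rw [hmax]; exact hgt⟩
    · rintro rfl; exact lt_irrefl _ hgt
    · rintro rfl; exact absurd hgt (not_lt.2 hle)
end

section
/- Let W : ℝ^N → ℝ^N be C² such that μ(α) = (1/2)‖W(α)‖² is coercive and the Jacobian J(α) is nonsingular for all α ∈ ℝ^N. Then W has exactly one root, i.e. there exists a unique α* with W(α*) = 0. -/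
open Set Filter Metric

variable {N : ℕ}

-- derivative of components
lemma aux_fderiv_comp (W : (Fin N → ℝ) → (Fin N → ℝ)) (hW : ContDiff ℝ 2 W)
    (x : Fin N → ℝ) (i : Fin N) :
    fderiv ℝ (fun a => W a i) x = (ContinuousLinearMap.proj i).comp (fderiv ℝ W x) := by
  have hd : DifferentiableAt ℝ W x := (hW.differentiable (by norm_num)).differentiableAt
  have : (fun a => W a i) = (ContinuousLinearMap.proj (R := ℝ) (φ := fun _ : Fin N => ℝ) i) ∘ W :=
    rfl
  rw [this, fderiv_comp (x := x) (ContinuousLinearMap.differentiableAt _) hd,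
    ContinuousLinearMap.fderiv]

lemma aux_fderiv_eq (W : (Fin N → ℝ) → (Fin N → ℝ)) (hW : ContDiff ℝ 2 W)
    (J : (Fin N → ℝ) → Matrix (Fin N) (Fin N) ℝ)
    (hJ : ∀ α i j, J α i j = fderiv ℝ (fun a => W a i) α (Pi.single j 1))
    (x : Fin N → ℝ) :
    (fderiv ℝ W x : (Fin N → ℝ) →ₗ[ℝ] (Fin N → ℝ)) = Matrix.toLin' (J x) := by
  apply Module.Basis.ext (Pi.basisFun ℝ (Fin N))
  intro j
  rw [Pi.basisFun_apply, Matrix.toLin'_apply]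
  funext i
  have h1 : (fderiv ℝ W x) (Pi.single j 1) i = J x i j := by
    rw [hJ, aux_fderiv_comp W hW]
    rfl
  have h2 : ((J x).mulVec (Pi.single j 1)) i = J x i j := by
    simp [Matrix.mulVec_single]
  exact h1.trans h2.symm

lemma aux_chart (W : (Fin N → ℝ) → (Fin N → ℝ)) (hW : ContDiff ℝ 2 W)
    (J : (Fin N → ℝ) → Matrix (Fin N) (Fin N) ℝ)
    (hJ : ∀ α i j, J α i j = fderiv ℝ (fun a => W a i) α (Pi.single j 1))
    (hdet : ∀ α, (J α).det ≠ 0) (x : Fin N → ℝ) :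
    ∃ φ : OpenPartialHomeomorph (Fin N → ℝ) (Fin N → ℝ), x ∈ φ.source ∧ ⇑φ = W := by
  have hdet' : (fderiv ℝ W x).det ≠ 0 := by
    rw [ContinuousLinearMap.det, aux_fderiv_eq W hW J hJ x, LinearMap.det_toLin']
    exact hdet x
  set e := (fderiv ℝ W x).toContinuousLinearEquivOfDetNeZero hdet' with he
  have hstrict : HasStrictFDerivAt W (e : (Fin N → ℝ) →L[ℝ] (Fin N → ℝ)) x := by
    have h1 : HasStrictFDerivAt W (fderiv ℝ W x) x :=
      (hW.contDiffAt).hasStrictFDerivAt (by norm_num)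
    rwa [ContinuousLinearMap.coe_toContinuousLinearEquivOfDetNeZero]
  exact ⟨hstrict.toOpenPartialHomeomorph W, hstrict.mem_toOpenPartialHomeomorph_source,
    hstrict.toOpenPartialHomeomorph_coe⟩

lemma aux_mucont (W : (Fin N → ℝ) → (Fin N → ℝ)) (hW : ContDiff ℝ 2 W)
    (μ : (Fin N → ℝ) → ℝ) (hμ : ∀ α, μ α = (1/2) * ∑ i, (W α i)^2) :
    Continuous μ := by
  have : μ = fun α => (1/2) * ∑ i, (W α i)^2 := funext hμ
  rw [this]
  exact continuous_const.mul (continuous_finset_sum _ fun i _ =>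
    ((continuous_apply i).comp hW.continuous).pow 2)

lemma aux_sublevel (W : (Fin N → ℝ) → (Fin N → ℝ)) (hW : ContDiff ℝ 2 W)
    (μ : (Fin N → ℝ) → ℝ) (hμ : ∀ α, μ α = (1/2) * ∑ i, (W α i)^2)
    (hcoercive : Filter.Tendsto μ (Filter.cocompact _) Filter.atTop) (M : ℝ) :
    IsCompact {α | μ α ≤ M} := by
  have h1 : {α : Fin N → ℝ | M + 1 ≤ μ α} ∈ Filter.cocompact (Fin N → ℝ) :=
    hcoercive (Filter.mem_atTop (M+1))
  obtain ⟨K, hK, hKs⟩ := Filter.mem_cocompact.mp h1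
  apply hK.of_isClosed_subset
  · exact isClosed_le (aux_mucont W hW μ hμ) continuous_const
  · intro α hα
    by_contra hc
    have := hKs hc
    simp only [mem_setOf_eq] at this hα
    linarith

lemma aux_proper (W : (Fin N → ℝ) → (Fin N → ℝ)) (hW : ContDiff ℝ 2 W)
    (μ : (Fin N → ℝ) → ℝ) (hμ : ∀ α, μ α = (1/2) * ∑ i, (W α i)^2)
    (hcoercive : Filter.Tendsto μ (Filter.cocompact _) Filter.atTop)
    (K : Set (Fin N → ℝ)) (hK : IsCompact K) : IsCompact (W ⁻¹' K) := by
  obtain ⟨R, hR⟩ := hK.isBounded.subset_closedBall 0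
  apply (aux_sublevel W hW μ hμ hcoercive ((1/2) * (N * R^2))).of_isClosed_subset
  · exact hK.isClosed.preimage hW.continuous
  · intro α hα
    have h1 : W α ∈ closedBall 0 R := hR hα
    rw [mem_closedBall, dist_zero_right] at h1
    have h2 : ∀ i, (W α i)^2 ≤ R^2 := by
      intro i
      have : |W α i| ≤ R := le_trans (norm_le_pi_norm (W α) i) h1
      calc (W α i)^2 = |W α i|^2 := (sq_abs _).symm
        _ ≤ R^2 := by
            apply pow_le_pow_left₀ (abs_nonneg _) this
    have h3 : ∑ i, (W α i)^2 ≤ N * R^2 := by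
      calc ∑ i, (W α i)^2 ≤ ∑ _i : Fin N, R^2 := Finset.sum_le_sum fun i _ => h2 i
        _ = N * R^2 := by simp [Finset.sum_const]
    simp only [mem_setOf_eq, hμ]
    nlinarith

lemma aux_exists_root (W : (Fin N → ℝ) → (Fin N → ℝ)) (hW : ContDiff ℝ 2 W)
    (J : (Fin N → ℝ) → Matrix (Fin N) (Fin N) ℝ)
    (hJ : ∀ α i j, J α i j = fderiv ℝ (fun a => W a i) α (Pi.single j 1))
    (μ : (Fin N → ℝ) → ℝ) (hμ : ∀ α, μ α = (1/2) * ∑ i, (W α i)^2)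
    (hcoercive : Filter.Tendsto μ (Filter.cocompact _) Filter.atTop)
    (hdet : ∀ α, (J α).det ≠ 0) :
    ∃ α, W α = 0 := by
  -- minimum of μ over a sublevel set
  have hScomp := aux_sublevel W hW μ hμ hcoercive (μ 0)
  have hS0 : (0 : Fin N → ℝ) ∈ {α | μ α ≤ μ 0} := by simp
  obtain ⟨α₀, hα₀S, hmin⟩ := hScomp.exists_isMinOn ⟨0, hS0⟩
    ((aux_mucont W hW μ hμ).continuousOn)
  have hglobal : ∀ α, μ α₀ ≤ μ α := by
    intro α
    by_cases h : μ α ≤ μ 0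
    · exact hmin h
    · exact le_trans (hmin hS0) (le_of_not_ge h)
  have hlocal : IsLocalMin μ α₀ := Filter.Eventually.of_forall hglobal
  have hfzero : fderiv ℝ μ α₀ = 0 := hlocal.fderiv_eq_zero
  -- compute the derivative of μ
  have hdW : DifferentiableAt ℝ W α₀ := (hW.differentiable (by norm_num)).differentiableAt
  have hdWi : ∀ i : Fin N, DifferentiableAt ℝ (fun a => W a i) α₀ := by
    intro i
    exact (differentiableAt_pi.mp hdW) i
  set D : Fin N → (Fin N → ℝ) →L[ℝ] ℝ := fun i => fderiv ℝ (fun a => W a i) α₀ with hD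
  have hμder : HasFDerivAt μ
      ((1/2 : ℝ) • (∑ i, (W α₀ i • D i + W α₀ i • D i))) α₀ := by
    have : μ = fun α => (1/2) * ∑ i, (W α i)^2 := funext hμ
    rw [this]
    apply HasFDerivAt.const_mul
    have : ∀ i ∈ Finset.univ, HasFDerivAt (fun α => (W α i)^2)
        (W α₀ i • D i + W α₀ i • D i) α₀ := by
      intro i _
      have h := ((hdWi i).hasFDerivAt).fun_mul ((hdWi i).hasFDerivAt)
      simpa [pow_two] using h
    exact HasFDerivAt.fun_sum this
  have hLzero : ((1/2 : ℝ) • (∑ i, (W α₀ i • D i + W α₀ i • D i))) = 0 := by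
    rw [← hμder.fderiv]
    exact hfzero
  -- evaluate at basis vectors
  have hvec : ∀ j, ∑ i, W α₀ i * J α₀ i j = 0 := by
    intro j
    have := congrArg (fun L => L (Pi.single j 1)) hLzero
    simp only [ContinuousLinearMap.smul_apply, ContinuousLinearMap.sum_apply,
      ContinuousLinearMap.add_apply, ContinuousLinearMap.zero_apply, smul_eq_mul] at this
    have h2 : ∀ i, D i (Pi.single j 1) = J α₀ i j := fun i => (hJ α₀ i j).symm
    simp only [h2] at this
    have h3 : (1/2 : ℝ) * ∑ i, (W α₀ i * J α₀ i j + W α₀ i * J α₀ i j) = 0 := this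
    rw [Finset.sum_congr rfl (fun i _ => by ring_nf : ∀ i ∈ Finset.univ,
      W α₀ i * J α₀ i j + W α₀ i * J α₀ i j = 2 * (W α₀ i * J α₀ i j))] at h3
    rw [← Finset.mul_sum] at h3
    linarith
  have hvm : Matrix.vecMul (W α₀) (J α₀) = Matrix.vecMul 0 (J α₀) := by
    funext j
    simp only [Matrix.vecMul, dotProduct]
    rw [hvec j]
    simp
  have hinj := Matrix.vecMul_injective_iff_isUnit.mpr
    ((Matrix.isUnit_iff_isUnit_det (J α₀)).mpr (isUnit_iff_ne_zero.mpr (hdet α₀)))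
  exact ⟨α₀, hinj hvm⟩
lemma aux_lift (f : (Fin N → ℝ) → (Fin N → ℝ)) (hf : Continuous f)
    (hchart : ∀ x, ∃ φ : OpenPartialHomeomorph (Fin N → ℝ) (Fin N → ℝ), x ∈ φ.source ∧ ⇑φ = f)
    (hproper : ∀ K : Set (Fin N → ℝ), IsCompact K → IsCompact (f ⁻¹' K))
    (p : ℝ → Fin N → ℝ) (hp : Continuous p) (e₀ : Fin N → ℝ) (he₀ : f e₀ = p 0) :
    ∃ q : ℝ → Fin N → ℝ, Continuous q ∧ q 0 = e₀ ∧ ∀ t ∈ Set.Icc (0:ℝ) 1, f (q t) = p t := by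
  classical
  set T : Set ℝ := {t | t ∈ Icc (0:ℝ) 1 ∧ ∃ q : ℝ → Fin N → ℝ,
    Continuous q ∧ q 0 = e₀ ∧ ∀ u ∈ Icc (0:ℝ) t, f (q u) = p u} with hT
  have h0T : (0:ℝ) ∈ T := by
    refine ⟨⟨le_refl _, zero_le_one⟩, fun _ => e₀, continuous_const, rfl, ?_⟩
    intro u hu
    have : u = 0 := le_antisymm hu.2 hu.1
    rw [this]; exact he₀
  have hTsub : T ⊆ Icc (0:ℝ) 1 := fun t ht => ht.1
  have hbdd : BddAbove T := (isBounded_Icc (0:ℝ) 1).subset hTsub |>.bddAbove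
  set c := sSup T with hc
  have hcmem : c ∈ Icc (0:ℝ) 1 :=
    ⟨le_csSup hbdd h0T, csSup_le ⟨0, h0T⟩ (fun t ht => ht.1.2)⟩
  -- sequence in T approaching c
  have hseq : ∀ n : ℕ, ∃ t ∈ T, c - 1/(n+1) < t := by
    intro n
    apply exists_lt_of_lt_csSup ⟨0, h0T⟩
    have : (0:ℝ) < 1/(n+1) := by positivity
    linarith
  choose ts hts hts2 using hseq
  have htsc : ∀ n, ts n ≤ c := fun n => le_csSup hbdd (hts n)
  have htslim : Tendsto ts atTop (nhds c) := by
    have h1 : Tendsto (fun n : ℕ => c - 1/(n+1)) atTop (nhds c) := by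
      have := tendsto_one_div_add_atTop_nhds_zero_nat (𝕜 := ℝ)
      have h2 := Tendsto.const_sub c this
      simpa using h2
    exact tendsto_of_tendsto_of_tendsto_of_le_of_le h1 tendsto_const_nhds
      (fun n => le_of_lt (hts2 n)) htsc
  choose qs hqsc hqs0 hqsl using fun n => (hts n).2
  -- accumulation point of endpoints
  set C := f ⁻¹' (p '' Icc (0:ℝ) 1) with hCdef
  have hCcomp : IsCompact C := hproper _ (isCompact_Icc.image hp)
  have hxC : ∀ n, qs n (ts n) ∈ C := by
    intro n
    have h1 : f (qs n (ts n)) = p (ts n) := hqsl n (ts n) ⟨(hts n).1.1, le_refl _⟩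
    exact mem_preimage.mpr ⟨ts n, hTsub (hts n), h1.symm⟩
  obtain ⟨z, hzC, ψ, hψmono, hψlim⟩ := hCcomp.tendsto_subseq hxC
  have hfz : f z = p c := by
    have h1 : Tendsto (fun n => f (qs (ψ n) (ts (ψ n)))) atTop (nhds (f z)) :=
      (hf.continuousAt.tendsto).comp hψlim
    have h2 : Tendsto (fun n => p (ts (ψ n))) atTop (nhds (p c)) :=
      (hp.continuousAt.tendsto).comp (htslim.comp hψmono.tendsto_atTop)
    have h3 : (fun n => f (qs (ψ n) (ts (ψ n)))) = fun n => p (ts (ψ n)) := by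
      funext n
      exact hqsl (ψ n) (ts (ψ n)) ⟨(hts (ψ n)).1.1, le_refl _⟩
    rw [h3] at h1
    exact tendsto_nhds_unique h1 h2
  obtain ⟨φ, hzφ, hφf⟩ := hchart z
  -- δ from continuity of p at c
  have hmemtarget : p c ∈ φ.target := by
    rw [← hfz, ← hφf]
    exact φ.map_source hzφ
  have hnhds : ∀ᶠ u in nhds c, p u ∈ φ.target :=
    hp.continuousAt (φ.open_target.mem_nhds hmemtarget)
  obtain ⟨δ, hδpos, hδ⟩ := Metric.eventually_nhds_iff.mp hnhds
  -- pick a good index n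
  have hev1 : ∀ᶠ n in atTop, ts (ψ n) > c - δ :=
    (htslim.comp hψmono.tendsto_atTop).eventually
      (eventually_gt_nhds (show c - δ < c by linarith))
  have hev2 : ∀ᶠ n in atTop, qs (ψ n) (ts (ψ n)) ∈ φ.source :=
    hψlim.eventually (φ.open_source.mem_nhds hzφ)
  obtain ⟨n, hn1, hn2⟩ := (hev1.and hev2).exists
  set a := ts (ψ n) with ha
  set q := qs (ψ n) with hq
  have haT : a ∈ T := hts (ψ n)
  have ha0 : 0 ≤ a := haT.1.1
  have hac : a ≤ c := htsc (ψ n)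
  set m := min 1 (c + δ/2) with hm
  have ham : a ≤ m := le_min haT.1.2 (by linarith)
  have hm0 : 0 ≤ m := le_trans ha0 ham
  have htarget : ∀ u ∈ Icc a m, p u ∈ φ.target := by
    intro u hu
    apply hδ
    rw [Real.dist_eq, abs_lt]
    constructor
    · have h1 : c - δ < u := lt_of_lt_of_le hn1 hu.1
      linarith
    · have h2 : u ≤ c + δ/2 := le_trans hu.2 (min_le_right _ _)
      linarith
  -- the extension r
  set clamp : ℝ → ℝ := fun u => max a (min u m) with hclampdef
  have hclampcont : Continuous clamp := continuous_const.max (continuous_id.min continuous_const)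
  have hclampmem : ∀ u, clamp u ∈ Icc a m := by
    intro u
    exact ⟨le_max_left _ _, max_le ham (min_le_right _ _)⟩
  set r : ℝ → Fin N → ℝ := fun u => φ.symm (p (clamp u)) with hrdef
  have hrcont : Continuous r := by
    apply φ.continuousOn_symm.comp_continuous (hp.comp hclampcont)
    intro u
    exact htarget _ (hclampmem u)
  have hfq : f (q a) = p a := hqsl (ψ n) a ⟨ha0, le_refl _⟩
  have hra : r a = q a := by
    have h1 : clamp a = a := by
      rw [hclampdef]
      simp [min_eq_left ham, max_eq_left (le_refl a)]
    rw [hrdef]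
    simp only [h1]
    rw [← hfq, ← hφf]
    exact φ.left_inv hn2
  -- glued function
  set Q : ℝ → Fin N → ℝ := fun u => if u ≤ a then q u else r u with hQdef
  have hQcont : Continuous Q := by
    apply Continuous.if_le (hqsc (ψ n)) hrcont continuous_id continuous_const
    intro u hu
    have huA : u = a := hu
    rw [huA]
    exact hra.symm
  have hQ0 : Q 0 = e₀ := by
    rw [hQdef]
    simp only [if_pos ha0]
    exact hqs0 (ψ n)
  have hQl : ∀ u ∈ Icc (0:ℝ) m, f (Q u) = p u := by
    intro u hu
    by_cases h : u ≤ a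
    · rw [hQdef]; simp only [if_pos h]
      exact hqsl (ψ n) u ⟨hu.1, h⟩
    · rw [hQdef]; simp only [if_neg h]
      push_neg at h
      have hclampu : clamp u = u := by
        rw [hclampdef]
        simp [min_eq_left hu.2, max_eq_right (le_of_lt h)]
      rw [hrdef]
      simp only [hclampu]
      rw [← hφf]
      exact φ.right_inv (htarget u ⟨le_of_lt h, hu.2⟩)
  have hmT : m ∈ T := ⟨⟨hm0, min_le_left _ _⟩, Q, hQcont, hQ0, hQl⟩
  have hmc : m ≤ c := le_csSup hbdd hmT
  have hceq : c = 1 := by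
    by_contra hne
    have h1 : c < 1 := lt_of_le_of_ne hcmem.2 hne
    have : c < m := lt_min h1 (by linarith)
    linarith
  have : m = 1 := by
    rw [hm, hceq]
    exact min_eq_left (by linarith)
  rw [hceq] at hmc
  exact ⟨Q, hQcont, hQ0, by rw [← this]; exact hQl⟩
lemma aux_endpoint (f : (Fin N → ℝ) → (Fin N → ℝ)) (hf : Continuous f)
    (hchart : ∀ x, ∃ φ : OpenPartialHomeomorph (Fin N → ℝ) (Fin N → ℝ), x ∈ φ.source ∧ ⇑φ = f)
    (p q : ℝ → Fin N → ℝ) (hq : Continuous q)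
    (hlift : ∀ t ∈ Icc (0:ℝ) 1, f (q t) = p t) :
    ∃ ε > 0, ∀ p' q' : ℝ → Fin N → ℝ, Continuous p' → Continuous q' →
      (∀ t ∈ Icc (0:ℝ) 1, f (q' t) = p' t) → q' 0 = q 0 → p' 1 = p 1 →
      (∀ t ∈ Icc (0:ℝ) 1, dist (p' t) (p t) < ε) → q' 1 = q 1 := by
  classical
  have hlh : IsLocalHomeomorph f := by
    intro x
    obtain ⟨φ, h1, h2⟩ := hchart x
    exact ⟨φ, h1, h2.symm⟩
  set K := q '' Icc (0:ℝ) 1 with hK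
  have hKcomp : IsCompact K := isCompact_Icc.image hq
  -- Lebesgue number
  obtain ⟨δL, hδLpos, hδL⟩ := lebesgue_number_lemma_of_metric
    (ι := {φ : OpenPartialHomeomorph (Fin N → ℝ) (Fin N → ℝ) // ⇑φ = f}) hKcomp
    (fun i => i.1.open_source) (by
      intro x hx
      obtain ⟨φ, h1, h2⟩ := hchart x
      exact mem_iUnion.mpr ⟨⟨φ, h2⟩, h1⟩)
  set δ₀ := δL / 2 with hδ₀
  have hδ₀pos : 0 < δ₀ := by positivity
  -- uniform injectivity on balls of radius 2δ₀
  have hinj : ∀ x ∈ K, InjOn f (ball x (2 * δ₀)) := by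
    intro x hx
    obtain ⟨i, hi⟩ := hδL x hx
    have hsub : ball x (2 * δ₀) ⊆ i.1.source := by
      rw [hδ₀]
      have : 2 * (δL / 2) = δL := by ring
      rw [this]
      exact hi
    have := i.1.injOn.mono hsub
    rwa [i.2] at this
  -- uniform openness
  have hstep : ∀ x ∈ K, ∃ ε > 0, ∃ ρ > 0, ρ ≤ δ₀/2 ∧
      ball (f x) (2*ε) ⊆ f '' ball x (δ₀/2) ∧
      ∀ y, dist y x < ρ → dist (f y) (f x) < ε := by
    intro x _
    have hopen : IsOpen (f '' ball x (δ₀/2)) := hlh.isOpenMap _ isOpen_ball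
    have hmem : f x ∈ f '' ball x (δ₀/2) :=
      mem_image_of_mem f (mem_ball_self (by positivity))
    obtain ⟨ε', hε'pos, hε'⟩ := Metric.isOpen_iff.mp hopen _ hmem
    obtain ⟨ρ', hρ'pos, hρ'⟩ := Metric.continuousAt_iff.mp hf.continuousAt (ε'/2) (by positivity)
    refine ⟨ε'/2, by positivity, min ρ' (δ₀/2), by positivity, min_le_right _ _, ?_, ?_⟩
    · have : 2 * (ε'/2) = ε' := by ring
      rw [this]
      exact hε'
    · intro y hy
      exact hρ' (lt_of_lt_of_le hy (min_le_left _ _))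
  choose! eps heps rho hrho hrhole himg hcont using hstep
  -- finite subcover
  obtain ⟨s, hs⟩ := hKcomp.elim_finite_subcover (fun x : K => ball (x : Fin N → ℝ) (rho x))
    (fun x => isOpen_ball) (by
      intro x hx
      exact mem_iUnion.mpr ⟨⟨x, hx⟩, mem_ball_self (hrho x hx)⟩)
  by_cases hsne : s.Nonempty
  case neg =>
    -- K covered by empty union: K empty, so Icc 0 1 maps... but Icc nonempty, K nonempty
    exfalso
    have : q 0 ∈ K := mem_image_of_mem q ⟨le_refl _, zero_le_one⟩
    have h2 := hs this
    simp only [Finset.not_nonempty_iff_eq_empty.mp hsne] at h2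
    simpa using h2
  set ε₀ := s.inf' hsne (fun x => eps x) with hε₀
  have hε₀pos : 0 < ε₀ := by
    rw [hε₀, Finset.lt_inf'_iff]
    intro b hb
    exact heps b b.2
  have hopen₀ : ∀ x ∈ K, ball (f x) ε₀ ⊆ f '' ball x δ₀ := by
    intro x hx
    obtain ⟨i, his, hxball⟩ := mem_iUnion₂.mp (hs hx)
    intro y hy
    have hε₀le : ε₀ ≤ eps i := Finset.inf'_le _ his
    have h1 : dist (f x) (f i) < eps i := hcont i i.2 x hxball
    have h2 : dist y (f i) < 2 * eps i := by
      calc dist y (f i) ≤ dist y (f x) + dist (f x) (f i) := dist_triangle _ _ _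
        _ < ε₀ + eps i := by
            apply add_lt_add_of_lt_of_le (mem_ball.mp hy)
            exact le_of_lt h1
        _ ≤ eps i + eps i := by linarith
        _ = 2 * eps i := by ring
    have h3 := himg i i.2 (mem_ball.mpr h2)
    obtain ⟨w, hw, hfw⟩ := h3
    refine ⟨w, ?_, hfw⟩
    rw [mem_ball] at hw hxball ⊢
    have h4 : dist w x ≤ dist w (i : Fin N → ℝ) + dist (i : Fin N → ℝ) x := dist_triangle _ _ _
    have h5 : dist (i : Fin N → ℝ) x = dist x (i : Fin N → ℝ) := dist_comm _ _
    have h6 := hrhole i i.2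
    linarith
  -- conclusion
  refine ⟨ε₀, hε₀pos, ?_⟩
  intro p' q' hp' hq' hlift' h0 h1 hclose
  have key : ∀ t ∈ Icc (0:ℝ) 1, dist (q' t) (q t) ≤ δ₀ → dist (q' t) (q t) < δ₀ := by
    intro t ht hd
    have hxK : q t ∈ K := mem_image_of_mem q ht
    have hball : p' t ∈ ball (f (q t)) ε₀ := by
      rw [mem_ball, hlift t ht]
      exact hclose t ht
    obtain ⟨x', hx'ball, hfx'⟩ := hopen₀ _ hxK hball
    have hq'mem : q' t ∈ ball (q t) (2 * δ₀) := by
      rw [mem_ball]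
      linarith
    have hx'mem : x' ∈ ball (q t) (2 * δ₀) := by
      rw [mem_ball] at hx'ball ⊢
      linarith
    have heq : q' t = x' := by
      apply hinj _ hxK hq'mem hx'mem
      rw [hfx', hlift' t ht]
    rw [heq]
    exact mem_ball.mp hx'ball
  have hall : ∀ t ∈ Icc (0:ℝ) 1, dist (q' t) (q t) < δ₀ := by
    by_contra hcon
    push_neg at hcon
    obtain ⟨t₁, ht₁, ht₁d⟩ := hcon
    have hA : IsClosed {t : ℝ | dist (q' t) (q t) ≤ δ₀} :=
      isClosed_le (hq'.dist hq) continuous_const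
    have hB : IsClosed {t : ℝ | δ₀ ≤ dist (q' t) (q t)} :=
      isClosed_le continuous_const (hq'.dist hq)
    have hpc := isPreconnected_closed_iff.mp (isPreconnected_Icc (a := (0:ℝ)) (b := 1))
    obtain ⟨u, huIcc, huA, huB⟩ := hpc _ _ hA hB
      (by
        intro t _
        rcases le_total (dist (q' t) (q t)) δ₀ with h | h
        · exact Or.inl h
        · exact Or.inr h)
      (⟨0, ⟨le_refl _, zero_le_one⟩, by
        simp only [mem_setOf_eq, h0]
        rw [dist_self]
        exact le_of_lt hδ₀pos⟩)
      (⟨t₁, ht₁, ht₁d⟩)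
    have := key u huIcc huA
    simp only [mem_setOf_eq] at huB
    linarith
  -- endpoints agree
  have h1Icc : (1:ℝ) ∈ Icc (0:ℝ) 1 := ⟨zero_le_one, le_refl _⟩
  have hxK : q 1 ∈ K := mem_image_of_mem q h1Icc
  apply hinj _ hxK
  · rw [mem_ball]
    have := hall 1 h1Icc
    linarith
  · exact mem_ball_self (by positivity)
  · rw [hlift' 1 h1Icc, hlift 1 h1Icc, h1]

lemma aux_unique (W : (Fin N → ℝ) → (Fin N → ℝ)) (hW : ContDiff ℝ 2 W)
    (J : (Fin N → ℝ) → Matrix (Fin N) (Fin N) ℝ)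
    (hJ : ∀ α i j, J α i j = fderiv ℝ (fun a => W a i) α (Pi.single j 1))
    (μ : (Fin N → ℝ) → ℝ) (hμ : ∀ α, μ α = (1/2) * ∑ i, (W α i)^2)
    (hcoercive : Filter.Tendsto μ (Filter.cocompact _) Filter.atTop)
    (hdet : ∀ α, (J α).det ≠ 0)
    (a b : Fin N → ℝ) (ha : W a = 0) (hb : W b = 0) : a = b := by
  classical
  have hf : Continuous W := hW.continuous
  have hchart := aux_chart W hW J hJ hdet
  have hproper := aux_proper W hW μ hμ hcoercive
  -- the straight segment and the family of paths
  set γ : ℝ → Fin N → ℝ := fun t => a + t • (b - a) with hγdef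
  have hγcont : Continuous γ := continuous_const.add (continuous_id.smul continuous_const)
  have hγ0 : γ 0 = a := by simp [hγdef]
  have hγ1 : γ 1 = b := by simp [hγdef]
  set ps : ℝ → ℝ → Fin N → ℝ := fun s t => s • W (γ t) with hpsdef
  have hpscont : ∀ s, Continuous (ps s) :=
    fun s => ((hf.comp hγcont).const_smul s)
  have hps0 : ∀ s, ps s 0 = 0 := by
    intro s
    simp [hpsdef, hγ0, ha]
  have hps1 : ∀ s, ps s 1 = 0 := by
    intro s
    simp [hpsdef, hγ1, hb]
  -- bound on the segment image
  obtain ⟨Cb, hCb⟩ := isCompact_Icc.exists_bound_of_continuousOn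
    ((hf.comp hγcont).continuousOn (s := Icc (0:ℝ) 1))
  have hCb0 : 0 ≤ Cb := le_trans (norm_nonneg _) (hCb 0 ⟨le_refl _, zero_le_one⟩)
  -- lifts for all s
  have hlifts : ∀ s : ℝ, ∃ q : ℝ → Fin N → ℝ, Continuous q ∧ q 0 = a ∧
      ∀ t ∈ Icc (0:ℝ) 1, W (q t) = ps s t := by
    intro s
    apply aux_lift W hf hchart hproper (ps s) (hpscont s) a
    rw [ha, hps0]
  choose qf hqc hq0 hql using hlifts
  set e : ℝ → Fin N → ℝ := fun s => qf s 1 with hedef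
  -- local constancy of e
  have hlocal : ∀ s₀ : ℝ, ∃ d > 0, ∀ s : ℝ, dist s s₀ < d → e s = e s₀ := by
    intro s₀
    obtain ⟨ε, hεpos, hεp⟩ := aux_endpoint W hf hchart (ps s₀) (qf s₀) (hqc s₀) (hql s₀)
    refine ⟨ε / (Cb + 1), by positivity, ?_⟩
    intro s hs
    apply hεp (ps s) (qf s) (hpscont s) (hqc s) (hql s)
      (by rw [hq0 s, hq0 s₀]) (by rw [hps1, hps1])
    intro t ht
    have h1 : dist (ps s t) (ps s₀ t) = |s - s₀| * ‖W (γ t)‖ := by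
      rw [dist_eq_norm, hpsdef]
      simp only
      rw [← sub_smul, norm_smul, Real.norm_eq_abs]
    rw [h1]
    have h2 : ‖W (γ t)‖ ≤ Cb := hCb t ht
    have h3 : |s - s₀| < ε / (Cb + 1) := by
      rw [← Real.dist_eq]
      exact hs
    have h4 : |s - s₀| ≥ 0 := abs_nonneg _
    calc |s - s₀| * ‖W (γ t)‖ ≤ |s - s₀| * Cb := by
          apply mul_le_mul_of_nonneg_left h2 h4
      _ < (ε / (Cb + 1)) * (Cb + 1) := by
          apply lt_of_le_of_lt (b := |s - s₀| * (Cb + 1))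
          · apply mul_le_mul_of_nonneg_left (by linarith) h4
          · apply mul_lt_mul_of_pos_right h3 (by linarith)
      _ = ε := by field_simp
  choose dd hddpos hdd using hlocal
  -- e is constant on ℝ
  have hconst : ∀ s : ℝ, e s = e 0 := by
    have hclopen : IsClopen {s : ℝ | e s = e 0} := by
      constructor
      · rw [← isOpen_compl_iff]
        rw [Metric.isOpen_iff]
        intro s hs
        refine ⟨dd s, hddpos s, ?_⟩
        intro s' hs'
        simp only [mem_compl_iff, mem_setOf_eq] at hs ⊢
        rw [hdd s s' hs']
        exact hs
      · rw [Metric.isOpen_iff]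
        intro s hs
        refine ⟨dd s, hddpos s, ?_⟩
        intro s' hs'
        simp only [mem_setOf_eq] at hs ⊢
        rw [hdd s s' hs']
        exact hs
    have := hclopen.eq_univ ⟨0, rfl⟩
    intro s
    have : s ∈ {s : ℝ | e s = e 0} := this ▸ mem_univ s
    exact this
  -- compute e 0 = a
  have he0 : e 0 = a := by
    obtain ⟨ε, hεpos, hεp⟩ := aux_endpoint W hf hchart (ps 0) (fun _ => a)
      continuous_const (by
        intro t _
        rw [ha]
        simp [hpsdef])
    have := hεp (ps 0) (qf 0) (hpscont 0) (hqc 0) (hql 0) (hq0 0) rfl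
      (by
        intro t ht
        rw [dist_self]
        exact hεpos)
    exact this
  -- compute e 1 = b
  have he1 : e 1 = b := by
    obtain ⟨ε, hεpos, hεp⟩ := aux_endpoint W hf hchart (ps 1) γ hγcont (by
      intro t _
      simp [hpsdef])
    have := hεp (ps 1) (qf 1) (hpscont 1) (hqc 1) (hql 1) (by rw [hq0 1, hγ0]) rfl
      (by
        intro t ht
        rw [dist_self]
        exact hεpos)
    rw [hedef]
    simp only
    rw [this, hγ1]
  rw [← he0, ← hconst 1]
  exact he1

theorem stmt_5 {N : ℕ} (W : (Fin N → ℝ) → (Fin N → ℝ))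
    (hW : ContDiff ℝ 2 W)
    (J : (Fin N → ℝ) → Matrix (Fin N) (Fin N) ℝ)
    (hJ : ∀ α i j, J α i j = fderiv ℝ (fun a => W a i) α (Pi.single j 1))
    (μ : (Fin N → ℝ) → ℝ)
    (hμ : ∀ α, μ α = (1/2) * ∑ i, (W α i)^2)
    (hcoercive : Filter.Tendsto μ (Filter.cocompact _) Filter.atTop)
    (hdet : ∀ α, (J α).det ≠ 0) :
    ∃! αstar, W αstar = 0 := by
  obtain ⟨α₀, hα₀⟩ := aux_exists_root W hW J hJ μ hμ hcoercive hdet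
  exact ⟨α₀, hα₀, fun y hy => aux_unique W hW J hJ μ hμ hcoercive hdet y α₀ hy hα₀⟩
end
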